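/- arXiv:1106.3673 — 8 statements merged into one kernel-verified Lean document; each statement's English description precedes it below -/
import Mathlib

section
/- There is no unit-speed solution of the system (S) on a nondegenerate interval whose third component has identically vanishing derivative. That is, if x, y, z : I → ℝ are twice differentiable on a nondegenerate interval I, satisfy x'' = x·z', y'' = y·z', z'' = −(x·x' + y·y'), have unit speed x'² + y'² + z'² = 1 on I, then z' cannot vanish identically on I. -/
/-- There are no horizontal unit-speed magnetic trajectories: for a unit-speed solution of
the system `x'' = x·z'`, `y'' = y·z'`, `z'' = −(x·x' + y·y')` on a nondegenerate interval `I`,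
the derivative `z'` cannot vanish identically on `I`. -/
theorem no_horizontal_trajectory (I : Set ℝ) (hI : I.OrdConnected)
    (a b : ℝ) (ha : a ∈ I) (hb : b ∈ I) (hab : a ≠ b)
    (x y z : ℝ → ℝ)
    (hx : ∀ t ∈ I, DifferentiableAt ℝ x t) (hx' : ∀ t ∈ I, DifferentiableAt ℝ (deriv x) t)
    (hy : ∀ t ∈ I, DifferentiableAt ℝ y t) (hy' : ∀ t ∈ I, DifferentiableAt ℝ (deriv y) t)
    (hz : ∀ t ∈ I, DifferentiableAt ℝ z t) (hz' : ∀ t ∈ I, DifferentiableAt ℝ (deriv z) t)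
    (h1 : ∀ t ∈ I, deriv (deriv x) t = x t * deriv z t)
    (h2 : ∀ t ∈ I, deriv (deriv y) t = y t * deriv z t)
    (h3 : ∀ t ∈ I, deriv (deriv z) t = -(x t * deriv x t + y t * deriv y t))
    (hunit : ∀ t ∈ I, deriv x t ^ 2 + deriv y t ^ 2 + deriv z t ^ 2 = 1) :
    ¬ (∀ t ∈ I, deriv z t = 0) := by
  intro h0
  -- Set up an open interval inside I
  set a' := min a b with ha'
  set b' := max a b with hb'
  have ha'I : a' ∈ I := by rcases min_choice a b with h | h <;> rw [ha', h] <;> assumption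
  have hb'I : b' ∈ I := by rcases max_choice a b with h | h <;> rw [hb', h] <;> assumption
  have hlt : a' < b' := min_lt_max.mpr hab
  have hsub : Set.Ioo a' b' ⊆ I := fun t ht =>
    hI.out ha'I hb'I ⟨le_of_lt ht.1, le_of_lt ht.2⟩
  set m := (a' + b') / 2 with hm
  have hmI : m ∈ Set.Ioo a' b' := ⟨by linarith, by linarith⟩
  have hmI' : m ∈ I := hsub hmI
  -- f = x x' + y y'
  set f : ℝ → ℝ := fun t => x t * deriv x t + y t * deriv y t with hf
  -- f vanishes on Ioo a' b'
  have hfz : ∀ t ∈ Set.Ioo a' b', f t = 0 := by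
    intro t ht
    have hev : deriv z =ᶠ[nhds t] fun _ => (0 : ℝ) :=
      Filter.eventuallyEq_of_mem (isOpen_Ioo.mem_nhds ht) (fun s hs => h0 s (hsub hs))
    have hdz : deriv (deriv z) t = 0 := by
      rw [hev.deriv_eq, deriv_const]
    have := h3 t (hsub ht)
    rw [hdz] at this
    have := this.symm
    simp only [neg_eq_zero] at this
    exact this
  -- hence deriv f m = 0
  have hfev : f =ᶠ[nhds m] fun _ => (0 : ℝ) :=
    Filter.eventuallyEq_of_mem (isOpen_Ioo.mem_nhds hmI) hfz
  have hderivf0 : deriv f m = 0 := by rw [hfev.deriv_eq, deriv_const]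
  -- compute deriv f m
  have hD : HasDerivAt f
      (deriv x m * deriv x m + x m * deriv (deriv x) m +
        (deriv y m * deriv y m + y m * deriv (deriv y) m)) m :=
    (((hx m hmI').hasDerivAt.mul (hx' m hmI').hasDerivAt).add
      ((hy m hmI').hasDerivAt.mul (hy' m hmI').hasDerivAt))
  have hDval := hD.deriv
  rw [hderivf0] at hDval
  have hz0 : deriv z m = 0 := h0 m hmI'
  have e1 := h1 m hmI'
  have e2 := h2 m hmI'
  have eu := hunit m hmI'
  rw [hz0] at e1 e2 eu
  rw [e1, e2] at hDval
  nlinarith [hDval, eu]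
end

section
/- Let x, y, z : ℝ → ℝ be twice differentiable functions satisfying x'' = x·z', y'' = y·z', z'' = −(x·x' + y·y'), and suppose x(t) = ρ(t)·cos(φ(t)), y(t) = ρ(t)·sin(φ(t)) for differentiable functions ρ, φ : ℝ → ℝ with ρ(t) > 0 for all t. Then the function t ↦ ρ(t)²·φ'(t) is constant. -/
/-- In cylindrical coordinates `x = ρ cos φ`, `y = ρ sin φ` (with `ρ > 0`), the angular
momentum `ρ²·φ'` of a solution of the system `x'' = x·z'`, `y'' = y·z'`,
`z'' = −(x·x' + y·y')` is constant. -/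
theorem angular_momentum_constant (x y z ρ φ : ℝ → ℝ)
    (hx : Differentiable ℝ x) (hx' : Differentiable ℝ (deriv x))
    (hy : Differentiable ℝ y) (hy' : Differentiable ℝ (deriv y))
    (hz : Differentiable ℝ z) (hz' : Differentiable ℝ (deriv z))
    (h1 : ∀ t : ℝ, deriv (deriv x) t = x t * deriv z t)
    (h2 : ∀ t : ℝ, deriv (deriv y) t = y t * deriv z t)
    (h3 : ∀ t : ℝ, deriv (deriv z) t = -(x t * deriv x t + y t * deriv y t))
    (hρ : Differentiable ℝ ρ) (hφ : Differentiable ℝ φ)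
    (hρpos : ∀ t : ℝ, 0 < ρ t)
    (hxρφ : ∀ t : ℝ, x t = ρ t * Real.cos (φ t))
    (hyρφ : ∀ t : ℝ, y t = ρ t * Real.sin (φ t)) :
    ∀ s t : ℝ, ρ s ^ 2 * deriv φ s = ρ t ^ 2 * deriv φ t := by
  -- Step 1: ρ²φ' = x·y' − y·x'
  have key : ∀ t : ℝ, ρ t ^ 2 * deriv φ t = x t * deriv y t - y t * deriv x t := by
    intro t
    have hxeq : x = fun s => ρ s * Real.cos (φ s) := funext hxρφ
    have hyeq : y = fun s => ρ s * Real.sin (φ s) := funext hyρφ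
    have hdx : HasDerivAt x (deriv ρ t * Real.cos (φ t) +
        ρ t * (-Real.sin (φ t) * deriv φ t)) t := by
      rw [hxeq]
      exact (hρ t).hasDerivAt.mul
        (((Real.hasDerivAt_cos (φ t)).comp t (hφ t).hasDerivAt))
    have hdy : HasDerivAt y (deriv ρ t * Real.sin (φ t) +
        ρ t * (Real.cos (φ t) * deriv φ t)) t := by
      rw [hyeq]
      exact (hρ t).hasDerivAt.mul
        (((Real.hasDerivAt_sin (φ t)).comp t (hφ t).hasDerivAt))
    rw [hdx.deriv, hdy.deriv, hxρφ t, hyρφ t]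
    have h := Real.sin_sq_add_cos_sq (φ t)
    linear_combination (-(ρ t ^ 2 * deriv φ t)) * h
  -- Step 2: L = x·y' − y·x' is constant
  have hconst : ∀ s t : ℝ, x s * deriv y s - y s * deriv x s
      = x t * deriv y t - y t * deriv x t := by
    apply is_const_of_deriv_eq_zero
    · exact (hx.mul hy').sub (hy.mul hx')
    · intro t
      have hd : HasDerivAt (fun s => x s * deriv y s - y s * deriv x s)
          ((deriv x t * deriv y t + x t * deriv (deriv y) t) -
           (deriv y t * deriv x t + y t * deriv (deriv x) t)) t :=
        ((hx t).hasDerivAt.mul (hy' t).hasDerivAt).sub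
          ((hy t).hasDerivAt.mul (hx' t).hasDerivAt)
      rw [hd.deriv, h1 t, h2 t]
      ring
  intro s t
  rw [key s, key t]
  exact hconst s t
end

section
/- Let x, y, z : ℝ → ℝ be twice differentiable functions satisfying x'' = x·z', y'' = y·z', z'' = −(x·x' + y·y') with unit speed x'² + y'² + z'² = 1. Set p₀ = x(0)·y'(0) − x'(0)·y(0), q₀ = z'(0) + (x(0)² + y(0)²)/2, and f(t) = x(t)² + y(t)². Then for all t: f'(t)² + f(t)³ − 4q₀·f(t)² + 4(q₀² − 1)·f(t) + 4p₀² = 0. -/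
/-- For a unit-speed solution of the system `x'' = x·z'`, `y'' = y·z'`,
`z'' = −(x·x' + y·y')`, the function `f = x² + y²` satisfies the ODE
`f'² + f³ − 4q₀f² + 4(q₀² − 1)f + 4p₀² = 0`, where `p₀ = x(0)y'(0) − x'(0)y(0)` and
`q₀ = z'(0) + (x(0)² + y(0)²)/2`. -/
theorem squared_radius_ode (x y z : ℝ → ℝ)
    (hx : Differentiable ℝ x) (hx' : Differentiable ℝ (deriv x))
    (hy : Differentiable ℝ y) (hy' : Differentiable ℝ (deriv y))
    (hz : Differentiable ℝ z) (hz' : Differentiable ℝ (deriv z))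
    (h1 : ∀ t : ℝ, deriv (deriv x) t = x t * deriv z t)
    (h2 : ∀ t : ℝ, deriv (deriv y) t = y t * deriv z t)
    (h3 : ∀ t : ℝ, deriv (deriv z) t = -(x t * deriv x t + y t * deriv y t))
    (hunit : ∀ t : ℝ, deriv x t ^ 2 + deriv y t ^ 2 + deriv z t ^ 2 = 1)
    (p₀ q₀ : ℝ)
    (hp₀ : p₀ = x 0 * deriv y 0 - deriv x 0 * y 0)
    (hq₀ : q₀ = deriv z 0 + (x 0 ^ 2 + y 0 ^ 2) / 2)
    (f : ℝ → ℝ) (hf : f = fun t => x t ^ 2 + y t ^ 2) :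
    ∀ t : ℝ,
      deriv f t ^ 2 + f t ^ 3 - 4 * q₀ * f t ^ 2 + 4 * (q₀ ^ 2 - 1) * f t + 4 * p₀ ^ 2 = 0 := by
  have hxd : ∀ t, HasDerivAt x (deriv x t) t := fun t => (hx t).hasDerivAt
  have hyd : ∀ t, HasDerivAt y (deriv y t) t := fun t => (hy t).hasDerivAt
  have hzd : ∀ t, HasDerivAt z (deriv z t) t := fun t => (hz t).hasDerivAt
  have hxd' : ∀ t, HasDerivAt (deriv x) (x t * deriv z t) t := fun t => by
    simpa [h1 t] using (hx' t).hasDerivAt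
  have hyd' : ∀ t, HasDerivAt (deriv y) (y t * deriv z t) t := fun t => by
    simpa [h2 t] using (hy' t).hasDerivAt
  have hzd' : ∀ t, HasDerivAt (deriv z) (-(x t * deriv x t + y t * deriv y t)) t := fun t => by
    simpa [h3 t] using (hz' t).hasDerivAt
  -- conserved quantity p
  set P : ℝ → ℝ := fun t => x t * deriv y t - deriv x t * y t with hP
  have hPdiff : Differentiable ℝ P := (hx.mul hy').sub (hx'.mul hy)
  have hPderiv : ∀ t, deriv P t = 0 := by
    intro t
    have h := ((hxd t).mul (hyd' t)).sub ((hxd' t).mul (hyd t))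
    have : HasDerivAt P 0 t := by
      convert h using 1 <;> try rfl
      ring
    exact this.deriv
  have hPconst : ∀ t, P t = p₀ := by
    intro t
    rw [hp₀]
    exact is_const_of_deriv_eq_zero hPdiff hPderiv t 0
  -- conserved quantity q
  set Q : ℝ → ℝ := fun t => deriv z t + (x t ^ 2 + y t ^ 2) / 2 with hQ
  have hQdiff : Differentiable ℝ Q :=
    hz'.add (((hx.pow 2).add (hy.pow 2)).div_const 2)
  have hQderiv : ∀ t, deriv Q t = 0 := by
    intro t
    have h := (hzd' t).add ((((hxd t).pow 2).add ((hyd t).pow 2)).div_const 2)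
    have : HasDerivAt Q 0 t := by
      convert h using 1 <;> try rfl
      ring
    exact this.deriv
  have hQconst : ∀ t, Q t = q₀ := by
    intro t
    rw [hq₀]
    exact is_const_of_deriv_eq_zero hQdiff hQderiv t 0
  intro t
  have hfderiv : deriv f t = 2 * x t * deriv x t + 2 * y t * deriv y t := by
    rw [hf]
    have h := ((hxd t).pow 2).add ((hyd t).pow 2)
    have : HasDerivAt (fun t => x t ^ 2 + y t ^ 2)
        (2 * x t * deriv x t + 2 * y t * deriv y t) t := by
      convert h using 1 <;> try rfl
      ring
    exact this.deriv
  have hp := hPconst t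
  have hq := hQconst t
  simp only [hP, hQ] at hp hq
  have hu := hunit t
  rw [hfderiv, hf]
  simp only
  rw [← hp, ← hq]
  linear_combination 4 * (x t ^ 2 + y t ^ 2) * hu
end

section
/- For any φ₀, t₀, z₀ ∈ ℝ, the curve γ(t) = (x(t), y(t), z(t)) with x(t) = 2cos(φ₀)/cosh(t − t₀), y(t) = 2sin(φ₀)/cosh(t − t₀), z(t) = z₀ + t − 2(tanh(t − t₀) + tanh(t₀)) satisfies the system x'' = x·z', y'' = y·z', z'' = −(x·x' + y·y') and is unit-speed: x'(t)² + y'(t)² + z'(t)² = 1 for all t ∈ ℝ. -/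
open Real

private lemma coshne (u : ℝ) : Real.cosh u ≠ 0 := (Real.cosh_pos u).ne'

private lemma hasDerivAt_cosh_sub (t₀ t : ℝ) :
    HasDerivAt (fun t => Real.cosh (t - t₀)) (Real.sinh (t - t₀)) t := by
  simpa [Function.comp_def] using (Real.hasDerivAt_cosh (t - t₀)).comp t ((hasDerivAt_id t).sub_const t₀)

private lemma hasDerivAt_sinh_sub (t₀ t : ℝ) :
    HasDerivAt (fun t => Real.sinh (t - t₀)) (Real.cosh (t - t₀)) t := by
  simpa [Function.comp_def] using (Real.hasDerivAt_sinh (t - t₀)).comp t ((hasDerivAt_id t).sub_const t₀)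

private lemma aux1 (a t₀ t : ℝ) :
    HasDerivAt (fun t => a / Real.cosh (t - t₀))
      (-(a * Real.sinh (t - t₀)) / Real.cosh (t - t₀) ^ 2) t := by
  have h := (hasDerivAt_const t a).div (hasDerivAt_cosh_sub t₀ t) (coshne _)
  refine h.congr_deriv ?_
  ring

private lemma aux2 (a t₀ t : ℝ) :
    HasDerivAt (fun t => -(a * Real.sinh (t - t₀)) / Real.cosh (t - t₀) ^ 2)
      (a * (Real.cosh (t - t₀) ^ 2 - 2) / Real.cosh (t - t₀) ^ 3) t := by
  have hnum : HasDerivAt (fun t => -(a * Real.sinh (t - t₀)))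
      (-(a * Real.cosh (t - t₀))) t := by
    exact ((hasDerivAt_sinh_sub t₀ t).const_mul a).neg
  have hden : HasDerivAt (fun t => Real.cosh (t - t₀) ^ 2)
      (2 * Real.cosh (t - t₀) * Real.sinh (t - t₀)) t := by
    simpa [mul_comm, mul_assoc, mul_left_comm, Pi.pow_def] using (hasDerivAt_cosh_sub t₀ t).pow 2
  have h := hnum.div hden (pow_ne_zero 2 (coshne _))
  refine h.congr_deriv ?_
  have hc := coshne (t - t₀)
  have hs : Real.sinh (t - t₀) ^ 2 = Real.cosh (t - t₀) ^ 2 - 1 := by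
    have := Real.cosh_sq_sub_sinh_sq (t - t₀); nlinarith [this]
  field_simp
  linear_combination (2 * a) * hs

private lemma hasDerivAt_z (t₀ z₀ t : ℝ) :
    HasDerivAt (fun t => z₀ + t - 2 * (Real.tanh (t - t₀) + Real.tanh t₀))
      (1 - 2 / Real.cosh (t - t₀) ^ 2) t := by
  have htanh : HasDerivAt (fun t => Real.tanh (t - t₀)) (1 / Real.cosh (t - t₀) ^ 2) t := by
    have h := (hasDerivAt_sinh_sub t₀ t).div (hasDerivAt_cosh_sub t₀ t) (coshne _)
    have heq : (fun t => Real.tanh (t - t₀)) = fun t => Real.sinh (t - t₀) / Real.cosh (t - t₀) := by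
      funext u; rw [Real.tanh_eq_sinh_div_cosh]
    rw [heq]
    refine h.congr_deriv ?_
    have := Real.cosh_sq_sub_sinh_sq (t - t₀)
    field_simp
    nlinarith [this]
  have h := ((hasDerivAt_const t z₀).add (hasDerivAt_id t)).sub
    ((htanh.add_const (Real.tanh t₀)).const_mul 2)
  refine h.congr_deriv ?_
  ring

private lemma aux3 (t₀ z₀ t : ℝ) :
    HasDerivAt (fun t => 1 - 2 / Real.cosh (t - t₀) ^ 2)
      (4 * Real.sinh (t - t₀) / Real.cosh (t - t₀) ^ 3) t := by
  have hden : HasDerivAt (fun t => Real.cosh (t - t₀) ^ 2)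
      (2 * Real.cosh (t - t₀) * Real.sinh (t - t₀)) t := by
    simpa [mul_comm, mul_assoc, mul_left_comm, Pi.pow_def] using (hasDerivAt_cosh_sub t₀ t).pow 2
  have h := ((hasDerivAt_const t (2:ℝ)).div hden (pow_ne_zero 2 (coshne _))).const_sub 1
  refine h.congr_deriv ?_
  have hc := coshne (t - t₀)
  field_simp
  ring

/-- The explicit planar curve `x(t) = 2cos(φ₀)/cosh(t − t₀)`, `y(t) = 2sin(φ₀)/cosh(t − t₀)`,
`z(t) = z₀ + t − 2(tanh(t − t₀) + tanh t₀)` satisfies the system `x'' = x·z'`, `y'' = y·z'`,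
`z'' = −(x·x' + y·y')` and has unit speed. -/
theorem explicit_planar_magnetic_curve (φ₀ t₀ z₀ : ℝ)
    (x y z : ℝ → ℝ)
    (hx : x = fun t => 2 * Real.cos φ₀ / Real.cosh (t - t₀))
    (hy : y = fun t => 2 * Real.sin φ₀ / Real.cosh (t - t₀))
    (hz : z = fun t => z₀ + t - 2 * (Real.tanh (t - t₀) + Real.tanh t₀)) :
    (∀ t : ℝ, deriv (deriv x) t = x t * deriv z t) ∧
    (∀ t : ℝ, deriv (deriv y) t = y t * deriv z t) ∧
    (∀ t : ℝ, deriv (deriv z) t = -(x t * deriv x t + y t * deriv y t)) ∧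
    (∀ t : ℝ, deriv x t ^ 2 + deriv y t ^ 2 + deriv z t ^ 2 = 1) := by
  subst hx hy hz
  set a := 2 * Real.cos φ₀ with ha
  set b := 2 * Real.sin φ₀ with hb
  have hab : a ^ 2 + b ^ 2 = 4 := by
    rw [ha, hb]; nlinarith [Real.sin_sq_add_cos_sq φ₀]
  have hdx : deriv (fun t => a / Real.cosh (t - t₀)) =
      fun t => -(a * Real.sinh (t - t₀)) / Real.cosh (t - t₀) ^ 2 := by
    funext t; exact (aux1 a t₀ t).deriv
  have hdy : deriv (fun t => b / Real.cosh (t - t₀)) =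
      fun t => -(b * Real.sinh (t - t₀)) / Real.cosh (t - t₀) ^ 2 := by
    funext t; exact (aux1 b t₀ t).deriv
  have hdz : deriv (fun t => z₀ + t - 2 * (Real.tanh (t - t₀) + Real.tanh t₀)) =
      fun t => 1 - 2 / Real.cosh (t - t₀) ^ 2 := by
    funext t; exact (hasDerivAt_z t₀ z₀ t).deriv
  refine ⟨?_, ?_, ?_, ?_⟩
  · intro t
    rw [hdx, hdz, (aux2 a t₀ t).deriv]
    have hc := coshne (t - t₀)
    field_simp
  · intro t
    rw [hdy, hdz, (aux2 b t₀ t).deriv]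
    have hc := coshne (t - t₀)
    field_simp
  · intro t
    rw [hdx, hdy, hdz, (aux3 t₀ z₀ t).deriv]
    have hc := coshne (t - t₀)
    field_simp
    linear_combination (-(Real.sinh (t - t₀))) * hab
  · intro t
    rw [hdx, hdy, hdz]
    have hc := coshne (t - t₀)
    have hs : Real.sinh (t - t₀) ^ 2 = Real.cosh (t - t₀) ^ 2 - 1 := by
      have := Real.cosh_sq_sub_sinh_sq (t - t₀); nlinarith [this]
    field_simp
    nlinarith [hab, hs]
end

section
/- Let p₀ ≠ 0 and q₀ be real numbers and set P(X) = X³ − 4q₀X² + 4(q₀² − 1)X + 4p₀². If there exists a nonconstant differentiable function f : I → ℝ on a nondegenerate interval I with f(t) > 0 and f'(t)² + P(f(t)) = 0 for all t ∈ I, then P has three distinct real roots, exactly two of which are positive and one of which is negative. -/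
/-- If the ODE `f'² + P(f) = 0`, with `P(X) = X³ − 4q₀X² + 4(q₀² − 1)X + 4p₀²` and
`p₀ ≠ 0`, admits a nonconstant positive differentiable solution on a nondegenerate
interval, then `P` has three distinct real roots, exactly two positive and one negative. -/
theorem cubic_has_two_positive_one_negative_root (p₀ q₀ : ℝ) (hp₀ : p₀ ≠ 0)
    (I : Set ℝ) (hI : I.OrdConnected)
    (a b : ℝ) (ha : a ∈ I) (hb : b ∈ I) (hab : a ≠ b)
    (f : ℝ → ℝ)
    (hdiff : ∀ t ∈ I, DifferentiableAt ℝ f t)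
    (hpos : ∀ t ∈ I, 0 < f t)
    (hnonconst : ∃ s ∈ I, ∃ t ∈ I, f s ≠ f t)
    (hode : ∀ t ∈ I,
      deriv f t ^ 2 +
        (f t ^ 3 - 4 * q₀ * f t ^ 2 + 4 * (q₀ ^ 2 - 1) * f t + 4 * p₀ ^ 2) = 0) :
    ∃ A B C : ℝ, A ≠ B ∧ A ≠ C ∧ B ≠ C ∧ 0 < A ∧ 0 < B ∧ C < 0 ∧
      ∀ X : ℝ, X ^ 3 - 4 * q₀ * X ^ 2 + 4 * (q₀ ^ 2 - 1) * X + 4 * p₀ ^ 2 =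
        (X - A) * (X - B) * (X - C) := by
  set g : ℝ → ℝ := fun X => X ^ 3 - 4 * q₀ * X ^ 2 + 4 * (q₀ ^ 2 - 1) * X + 4 * p₀ ^ 2
    with hg
  have hgcont : Continuous g := by fun_prop
  have hg0 : 0 < g 0 := by
    have := sq_nonneg p₀
    have hp2 : 0 < p₀ ^ 2 := by positivity
    simp only [hg]; nlinarith
  -- values where g ≤ 0
  have hle : ∀ t ∈ I, g (f t) ≤ 0 := by
    intro t ht
    have h1 := hode t ht
    have h2 := sq_nonneg (deriv f t)
    simp only [hg]; nlinarith
  obtain ⟨s, hs, t, ht, hst⟩ := hnonconst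
  -- u < v positive with g u ≤ 0, g v ≤ 0
  obtain ⟨u, v, huv, hu0, hgu, hgv⟩ :
      ∃ u v : ℝ, u < v ∧ 0 < u ∧ g u ≤ 0 ∧ g v ≤ 0 := by
    rcases lt_or_gt_of_ne hst with h | h
    · exact ⟨f s, f t, h, hpos s hs, hle s hs, hle t ht⟩
    · exact ⟨f t, f s, h, hpos t ht, hle t ht, hle s hs⟩
  -- root A in (0, u]
  obtain ⟨A, hAmem, hgA⟩ : ∃ A ∈ Set.Icc (0:ℝ) u, g A = 0 := by
    have h := intermediate_value_Icc' hu0.le hgcont.continuousOn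
    have : (0:ℝ) ∈ Set.Icc (g u) (g 0) := ⟨hgu, hg0.le⟩
    obtain ⟨A, hA, hA0⟩ := h this
    exact ⟨A, hA, hA0⟩
  have hApos : 0 < A := by
    rcases hAmem.1.lt_or_eq with h | h
    · exact h
    · exfalso; rw [← h] at hgA; linarith
  -- big w
  set w : ℝ := 1 + v + 4 * |q₀| + 4 * |q₀ ^ 2 - 1| + 4 * p₀ ^ 2 with hw
  have habs1 : q₀ ≤ |q₀| := le_abs_self _
  have habs2 : -|q₀| ≤ q₀ := neg_abs_le _
  have habs3 : q₀ ^ 2 - 1 ≤ |q₀ ^ 2 - 1| := le_abs_self _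
  have habs4 : -|q₀ ^ 2 - 1| ≤ q₀ ^ 2 - 1 := neg_abs_le _
  have habs5 : 0 ≤ |q₀| := abs_nonneg _
  have habs6 : 0 ≤ |q₀ ^ 2 - 1| := abs_nonneg _
  have hp2 : 0 < p₀ ^ 2 := by positivity
  have hv0 : 0 < v := hu0.trans huv
  have hw1 : 1 ≤ w := by simp only [hw]; nlinarith
  have hvw : v ≤ w := by simp only [hw]; nlinarith
  have hgw : 0 < g w := by
    simp only [hg]
    nlinarith [sq_nonneg w, mul_pos (hv0.trans_le hvw) (hv0.trans_le hvw),
      mul_nonneg (mul_nonneg habs5 (hv0.trans_le hvw).le) (hv0.trans_le hvw).le,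
      mul_nonneg habs6 (hv0.trans_le hvw).le]
  have hgnw : g (-w) < 0 := by
    simp only [hg]
    nlinarith [sq_nonneg w, mul_pos (hv0.trans_le hvw) (hv0.trans_le hvw),
      mul_nonneg (mul_nonneg habs5 (hv0.trans_le hvw).le) (hv0.trans_le hvw).le,
      mul_nonneg habs6 (hv0.trans_le hvw).le,
      mul_nonneg (mul_nonneg hp2.le (hv0.trans_le hvw).le) (hv0.trans_le hvw).le]
  -- root B in [v, w]
  obtain ⟨B, hBmem, hgB⟩ : ∃ B ∈ Set.Icc v w, g B = 0 := by
    have h := intermediate_value_Icc hvw hgcont.continuousOn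
    exact h ⟨hgv, hgw.le⟩
  -- root C in [-w, 0)
  obtain ⟨C, hCmem, hgC⟩ : ∃ C ∈ Set.Icc (-w) (0:ℝ), g C = 0 := by
    have h := intermediate_value_Icc (by linarith : -w ≤ (0:ℝ)) hgcont.continuousOn
    exact h ⟨hgnw.le, hg0.le⟩
  have hCneg : C < 0 := by
    rcases hCmem.2.lt_or_eq with h | h
    · exact h
    · exfalso; rw [h] at hgC; linarith
  have hAB : A < B := lt_of_le_of_lt hAmem.2 (lt_of_lt_of_le huv hBmem.1)
  have hBpos : 0 < B := hApos.trans hAB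
  -- Vieta
  simp only [hg] at hgA hgB hgC
  have hdAB : A - B ≠ 0 := sub_ne_zero.mpr hAB.ne
  have hdAC : A - C ≠ 0 := sub_ne_zero.mpr (hCneg.trans hApos).ne'
  have hdBC : B - C ≠ 0 := sub_ne_zero.mpr (hCneg.trans hBpos).ne'
  have EAB : A ^ 2 + A * B + B ^ 2 - 4 * q₀ * (A + B) + 4 * (q₀ ^ 2 - 1) = 0 := by
    have h : (A - B) * (A ^ 2 + A * B + B ^ 2 - 4 * q₀ * (A + B) + 4 * (q₀ ^ 2 - 1)) = 0 := by
      linear_combination hgA - hgB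
    exact (mul_eq_zero.mp h).resolve_left hdAB
  have EAC : A ^ 2 + A * C + C ^ 2 - 4 * q₀ * (A + C) + 4 * (q₀ ^ 2 - 1) = 0 := by
    have h : (A - C) * (A ^ 2 + A * C + C ^ 2 - 4 * q₀ * (A + C) + 4 * (q₀ ^ 2 - 1)) = 0 := by
      linear_combination hgA - hgC
    exact (mul_eq_zero.mp h).resolve_left hdAC
  have h1 : A + B + C = 4 * q₀ := by
    have h : (B - C) * (A + B + C - 4 * q₀) = 0 := by linear_combination EAB - EAC
    have := (mul_eq_zero.mp h).resolve_left hdBC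
    linarith
  have h2 : A * B + A * C + B * C = 4 * (q₀ ^ 2 - 1) := by
    linear_combination -EAB + (A + B) * h1
  have h3 : A * B * C = -(4 * p₀ ^ 2) := by
    linear_combination hgA - A ^ 2 * h1 + A * h2
  refine ⟨A, B, C, hAB.ne, (hCneg.trans hApos).ne', (hCneg.trans hBpos).ne',
    hApos, hBpos, hCneg, fun X => ?_⟩
  linear_combination X ^ 2 * h1 - X * h2 + h3
end

section
/- Let w₀ > 0 and let x, y, z : ℝ → ℝ be twice differentiable functions satisfying x'' = x·z', y'' = y·z', z'' = −(x·x' + y·y') with z'(t) = w₀ for all t. Then x ≡ 0 and y ≡ 0. -/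
/-- No magnetic trajectory with constant positive `z'` exists away from the `z`-axis:
a solution of the system `x'' = x·z'`, `y'' = y·z'`, `z'' = −(x·x' + y·y')` with
`z' ≡ w₀ > 0` has `x ≡ 0` and `y ≡ 0`. -/
theorem no_trajectory_with_positive_vertical_speed (w₀ : ℝ) (hw₀ : 0 < w₀)
    (x y z : ℝ → ℝ)
    (hx : Differentiable ℝ x) (hx' : Differentiable ℝ (deriv x))
    (hy : Differentiable ℝ y) (hy' : Differentiable ℝ (deriv y))
    (hz : Differentiable ℝ z) (hz' : Differentiable ℝ (deriv z))
    (h1 : ∀ t : ℝ, deriv (deriv x) t = x t * deriv z t)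
    (h2 : ∀ t : ℝ, deriv (deriv y) t = y t * deriv z t)
    (h3 : ∀ t : ℝ, deriv (deriv z) t = -(x t * deriv x t + y t * deriv y t))
    (hzp : ∀ t : ℝ, deriv z t = w₀) :
    ∀ t : ℝ, x t = 0 ∧ y t = 0 := by
  -- deriv z is constant, so deriv (deriv z) = 0
  have hdz : deriv z = fun _ => w₀ := funext hzp
  have hzz : ∀ t : ℝ, deriv (deriv z) t = 0 := by
    intro t; rw [hdz]; simp
  -- hence f := x x' + y y' ≡ 0
  have hf0 : (fun t => x t * deriv x t + y t * deriv y t) = fun _ => (0 : ℝ) := by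
    funext t
    have := h3 t
    rw [hzz t] at this
    linarith
  -- derivative of f
  have hfderiv : ∀ t : ℝ, HasDerivAt (fun t => x t * deriv x t + y t * deriv y t)
      (deriv x t * deriv x t + x t * deriv (deriv x) t
        + (deriv y t * deriv y t + y t * deriv (deriv y) t)) t := by
    intro t
    exact (((hx t).hasDerivAt.mul (hx' t).hasDerivAt).add
      ((hy t).hasDerivAt.mul (hy' t).hasDerivAt))
  intro t
  have hzero : deriv x t * deriv x t + x t * deriv (deriv x) t
      + (deriv y t * deriv y t + y t * deriv (deriv y) t) = 0 := by
    have h := hfderiv t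
    rw [hf0] at h
    have := h.deriv
    simpa using this.symm
  rw [h1 t, h2 t, hzp t] at hzero
  have hxsq : deriv x t * deriv x t ≥ 0 := mul_self_nonneg _
  have hysq : deriv y t * deriv y t ≥ 0 := mul_self_nonneg _
  have hx2 : w₀ * (x t * x t) ≥ 0 := mul_nonneg hw₀.le (mul_self_nonneg _)
  have hy2 : w₀ * (y t * y t) ≥ 0 := mul_nonneg hw₀.le (mul_self_nonneg _)
  have hxz : w₀ * (x t * x t) = 0 := by nlinarith
  have hyz : w₀ * (y t * y t) = 0 := by nlinarith
  constructor
  · have := (mul_eq_zero.mp hxz).resolve_left (ne_of_gt hw₀)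
    exact (mul_self_eq_zero).mp this
  · have := (mul_eq_zero.mp hyz).resolve_left (ne_of_gt hw₀)
    exact (mul_self_eq_zero).mp this
end

section
/- Let ρ₀ > 0, φ₀, z₀ ∈ ℝ and ε ∈ {1, −1}. Set ω = √((√(ρ₀⁴ + 4) − ρ₀²)/2). Then the curve γ(t) = (ρ₀·cos(φ₀ − εωt), ρ₀·sin(φ₀ − εωt), z₀ − ω²t) satisfies the system x'' = x·z', y'' = y·z', z'' = −(x·x' + y·y') and is unit-speed: x'(t)² + y'(t)² + z'(t)² = 1 for all t ∈ ℝ; moreover x(t)² + y(t)² = ρ₀² for all t. -/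
/-- The circular helices: with `ω = √((√(ρ₀⁴ + 4) − ρ₀²)/2)`, the curve
`x(t) = ρ₀cos(φ₀ − εωt)`, `y(t) = ρ₀sin(φ₀ − εωt)`, `z(t) = z₀ − ω²t` satisfies the system
`x'' = x·z'`, `y'' = y·z'`, `z'' = −(x·x' + y·y')`, has unit speed, and lies on the
cylinder of radius `ρ₀`. -/
theorem helix_magnetic_curve (ρ₀ φ₀ z₀ ε : ℝ) (hρ₀ : 0 < ρ₀) (hε : ε = 1 ∨ ε = -1)
    (ω : ℝ) (hω : ω = Real.sqrt ((Real.sqrt (ρ₀ ^ 4 + 4) - ρ₀ ^ 2) / 2))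
    (x y z : ℝ → ℝ)
    (hx : x = fun t => ρ₀ * Real.cos (φ₀ - ε * ω * t))
    (hy : y = fun t => ρ₀ * Real.sin (φ₀ - ε * ω * t))
    (hz : z = fun t => z₀ - ω ^ 2 * t) :
    (∀ t : ℝ, deriv (deriv x) t = x t * deriv z t) ∧
    (∀ t : ℝ, deriv (deriv y) t = y t * deriv z t) ∧
    (∀ t : ℝ, deriv (deriv z) t = -(x t * deriv x t + y t * deriv y t)) ∧
    (∀ t : ℝ, deriv x t ^ 2 + deriv y t ^ 2 + deriv z t ^ 2 = 1) ∧
    (∀ t : ℝ, x t ^ 2 + y t ^ 2 = ρ₀ ^ 2) := by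
  have hε2 : ε ^ 2 = 1 := by rcases hε with h | h <;> rw [h] <;> norm_num
  have hs : Real.sqrt (ρ₀ ^ 4 + 4) ^ 2 = ρ₀ ^ 4 + 4 := Real.sq_sqrt (by positivity)
  have hsge : ρ₀ ^ 2 ≤ Real.sqrt (ρ₀ ^ 4 + 4) := by
    rw [show ρ₀ ^ 2 = Real.sqrt ((ρ₀ ^ 2) ^ 2) from (Real.sqrt_sq (by positivity)).symm]
    apply Real.sqrt_le_sqrt; nlinarith
  have hω2 : ω ^ 2 = (Real.sqrt (ρ₀ ^ 4 + 4) - ρ₀ ^ 2) / 2 := by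
    rw [hω, Real.sq_sqrt (by linarith)]
  have hu : ∀ t : ℝ, HasDerivAt (fun t : ℝ => φ₀ - ε * ω * t) (-(ε * ω)) t := by
    intro t
    simpa using ((hasDerivAt_id t).const_mul (ε * ω)).const_sub φ₀
  have hx' : ∀ t : ℝ, HasDerivAt x (ρ₀ * (ε * ω) * Real.sin (φ₀ - ε * ω * t)) t := by
    intro t; rw [hx]
    have := ((Real.hasDerivAt_cos (φ₀ - ε * ω * t)).comp t (hu t)).const_mul ρ₀
    exact this.congr_deriv (by ring)
  have hy' : ∀ t : ℝ, HasDerivAt y (-(ρ₀ * (ε * ω)) * Real.cos (φ₀ - ε * ω * t)) t := by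
    intro t; rw [hy]
    have := ((Real.hasDerivAt_sin (φ₀ - ε * ω * t)).comp t (hu t)).const_mul ρ₀
    exact this.congr_deriv (by ring)
  have hz' : ∀ t : ℝ, HasDerivAt z (-ω ^ 2) t := by
    intro t; rw [hz]
    simpa using ((hasDerivAt_id t).const_mul (ω ^ 2)).const_sub z₀
  have dx : deriv x = fun t => ρ₀ * (ε * ω) * Real.sin (φ₀ - ε * ω * t) :=
    funext fun t => (hx' t).deriv
  have dy : deriv y = fun t => -(ρ₀ * (ε * ω)) * Real.cos (φ₀ - ε * ω * t) :=
    funext fun t => (hy' t).deriv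
  have dz : deriv z = fun t => -ω ^ 2 := funext fun t => (hz' t).deriv
  have dx2 : ∀ t : ℝ, HasDerivAt (deriv x)
      (ρ₀ * (ε * ω) * (Real.cos (φ₀ - ε * ω * t) * -(ε * ω))) t := by
    intro t; rw [dx]
    exact ((Real.hasDerivAt_sin (φ₀ - ε * ω * t)).comp t (hu t)).const_mul _
  have dy2 : ∀ t : ℝ, HasDerivAt (deriv y)
      (-(ρ₀ * (ε * ω)) * (-Real.sin (φ₀ - ε * ω * t) * -(ε * ω))) t := by
    intro t; rw [dy]
    exact ((Real.hasDerivAt_cos (φ₀ - ε * ω * t)).comp t (hu t)).const_mul _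
  have dz2 : ∀ t : ℝ, deriv (deriv z) t = 0 := by
    intro t; rw [dz]; simp
  have hpyth : ∀ s : ℝ, Real.sin s ^ 2 + Real.cos s ^ 2 = 1 := Real.sin_sq_add_cos_sq
  refine ⟨?_, ?_, ?_, ?_, ?_⟩
  · intro t
    rw [(dx2 t).deriv, hx, dz]; beta_reduce
    linear_combination (-(ρ₀ * ω ^ 2 * Real.cos (φ₀ - ε * ω * t))) * hε2
  · intro t
    rw [(dy2 t).deriv, hy, dz]; beta_reduce
    linear_combination (-(ρ₀ * ω ^ 2 * Real.sin (φ₀ - ε * ω * t))) * hε2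
  · intro t
    rw [dz2 t, dx, dy, hx, hy]; beta_reduce
    ring
  · intro t
    rw [dx, dy, dz]; beta_reduce
    have hp := hpyth (φ₀ - ε * ω * t)
    have key : ρ₀ ^ 2 * ω ^ 2 + ω ^ 4 = 1 := by nlinarith [hω2, hs]
    linear_combination (ρ₀ ^ 2 * ω ^ 2 * (Real.sin (φ₀ - ε * ω * t) ^ 2 + Real.cos (φ₀ - ε * ω * t) ^ 2)) * hε2 + ρ₀ ^ 2 * ω ^ 2 * hp + key
  · intro t
    rw [hx, hy]; beta_reduce
    have := hpyth (φ₀ - ε * ω * t)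
    nlinarith
end

section
/- Let s ≠ 0 and let γ(t) = (x(t), y(t), z(t)) : ℝ → ℝ³ be three times differentiable satisfying x'' = −s·y', y'' = s·x', z'' = 0, with unit speed x'² + y'² + z'² = 1 and z'(0) = w₀. Then for all t, the scalar triple product det(γ'(t), γ''(t), γ'''(t)) equals s³·w₀·(1 − w₀²). -/
private lemma coord_deriv {f : ℝ → Fin 3 → ℝ} (hf : Differentiable ℝ f) (i : Fin 3) (t : ℝ) :
    deriv (fun u => f u i) t = deriv f t i := by
  have := (hf t).hasDerivAt
  exact ((hasDerivAt_pi.1 this) i).deriv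

/-- For a unit-speed trajectory `γ` of the classical magnetic field of strength `s ≠ 0`
(`x'' = −s·y'`, `y'' = s·x'`, `z'' = 0`) with `z'(0) = w₀`, the scalar triple product
`det(γ', γ'', γ''')` equals `s³·w₀·(1 − w₀²)` (encoding the torsion `τ = s·w₀`). -/
theorem classical_magnetic_torsion (s w₀ : ℝ) (hs : s ≠ 0)
    (γ : ℝ → Fin 3 → ℝ)
    (hγ : Differentiable ℝ γ)
    (hγ1 : Differentiable ℝ (deriv γ))
    (hγ2 : Differentiable ℝ (deriv (deriv γ)))
    (h1 : ∀ t : ℝ, deriv (deriv γ) t 0 = -s * deriv γ t 1)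
    (h2 : ∀ t : ℝ, deriv (deriv γ) t 1 = s * deriv γ t 0)
    (h3 : ∀ t : ℝ, deriv (deriv γ) t 2 = 0)
    (hunit : ∀ t : ℝ, (deriv γ t 0) ^ 2 + (deriv γ t 1) ^ 2 + (deriv γ t 2) ^ 2 = 1)
    (hw₀ : deriv γ 0 2 = w₀) :
    ∀ t : ℝ,
      Matrix.det (Matrix.of ![deriv γ t, deriv (deriv γ) t, deriv (deriv (deriv γ)) t]) =
        s ^ 3 * w₀ * (1 - w₀ ^ 2) := by
  -- coordinate derivatives of deriv γ and deriv (deriv γ)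
  have hc1 : ∀ (i : Fin 3) (t : ℝ), deriv (fun u => deriv γ u i) t = deriv (deriv γ) t i :=
    fun i t => coord_deriv hγ1 i t
  have hc2 : ∀ (i : Fin 3) (t : ℝ),
      deriv (fun u => deriv (deriv γ) u i) t = deriv (deriv (deriv γ)) t i :=
    fun i t => coord_deriv hγ2 i t
  -- z' is constant
  have hzdiff : Differentiable ℝ (fun u => deriv γ u 2) := fun t =>
    ((hasDerivAt_pi.1 (hγ1 t).hasDerivAt) 2).differentiableAt
  have hzconst : ∀ t : ℝ, deriv γ t 2 = w₀ := by
    intro t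
    have := is_const_of_deriv_eq_zero hzdiff (fun x => by rw [hc1 2 x]; exact h3 x) t 0
    rw [this, hw₀]
  -- third derivative components
  have h31 : ∀ t : ℝ, deriv (deriv (deriv γ)) t 0 = -s * (s * deriv γ t 0) := by
    intro t
    rw [← hc2 0 t]
    have : (fun u => deriv (deriv γ) u 0) = fun u => -s * deriv γ u 1 := funext h1
    rw [this, deriv_const_mul _ ((hasDerivAt_pi.1 (hγ1 t).hasDerivAt) 1).differentiableAt, hc1 1 t, h2 t]
  have h32 : ∀ t : ℝ, deriv (deriv (deriv γ)) t 1 = s * (-s * deriv γ t 1) := by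
    intro t
    rw [← hc2 1 t]
    have : (fun u => deriv (deriv γ) u 1) = fun u => s * deriv γ u 0 := funext h2
    rw [this, deriv_const_mul _ ((hasDerivAt_pi.1 (hγ1 t).hasDerivAt) 0).differentiableAt, hc1 0 t, h1 t]
  intro t
  have hxy : (deriv γ t 0) ^ 2 + (deriv γ t 1) ^ 2 = 1 - w₀ ^ 2 := by
    have := hunit t
    rw [hzconst t] at this
    linarith
  rw [show (Matrix.of ![deriv γ t, deriv (deriv γ) t, deriv (deriv (deriv γ)) t]).det
      = deriv γ t 0 * (deriv (deriv γ) t 1 * deriv (deriv (deriv γ)) t 2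
          - deriv (deriv γ) t 2 * deriv (deriv (deriv γ)) t 1)
        - deriv γ t 1 * (deriv (deriv γ) t 0 * deriv (deriv (deriv γ)) t 2
          - deriv (deriv γ) t 2 * deriv (deriv (deriv γ)) t 0)
        + deriv γ t 2 * (deriv (deriv γ) t 0 * deriv (deriv (deriv γ)) t 1
          - deriv (deriv γ) t 1 * deriv (deriv (deriv γ)) t 0) from by
    simp [Matrix.det_fin_three]; ring]
  rw [h1 t, h2 t, h3 t, h31 t, h32 t, hzconst t]
  have h33 : deriv (deriv (deriv γ)) t 2 = 0 := by
    rw [← hc2 2 t]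
    have : (fun u => deriv (deriv γ) u 2) = fun _ => (0 : ℝ) := funext h3
    rw [this, deriv_const]
  rw [h33]
  linear_combination (s ^ 3 * w₀) * hxy
end
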